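/- No trapping of T-orthogonal bicharacteristics: let r₀ ∈ [r_e, r_c] and ε > 0. There is no curve x : ℝ → (r_e, r_c) × (0, π) × ℝ⁴, x(s) = (r(s), θ(s), ξ_t(s), ξ_r(s), ξ_φ(s), ξ_θ(s)), solving Hamilton's equations for q (namely r' = ∂_{ξ_r}q, θ' = ∂_{ξ_θ}q, ξ_t' = 0, ξ_φ' = 0, ξ_r' = −∂_r q, ξ_θ' = −∂_θ q) for all s ∈ ℝ, such that q(x(0)) = 0, (ξ_t, ξ_r, ξ_φ, ξ_θ)(0) ≠ 0, ξ_t(0) + (a/(r₀²+a²))ξ_φ(0) = 0, and r(s) ∈ [r_e + ε, r_c − ε] for all s ∈ ℝ. That is, every lightlike bicharacteristic orthogonal to the Killing field T = ∂_t + (a/(r₀²+a²))∂_φ eventually leaves the region r_e + ε ≤ r ≤ r_c − ε. -/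

import Mathlib

open Real

private lemma aux_P1pos (rC re rc x t : ℝ) (h2rC : 0 < 2*rC + re + rc) (hrCre : rC < re)
    (hre : 0 < re) (hrerc : re < rc) (hx1 : re ≤ x) (hx2 : x ≤ rc) (ht1 : re ≤ t) (ht2 : t ≤ rc) :
    0 < (x - rC)*(t^2 - x*(-(rC+re+rc))) + (x - (-(rC+re+rc)))*(t^2 - x*rC) := by
  have hx0 : 0 < x := lt_of_lt_of_le hre hx1
  have hT1 : 0 < 2*x*((re - rC)*(2*re + rC + rc)) := by
    apply mul_pos (by linarith)
    apply mul_pos (by linarith) (by linarith)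
  have hT2 : 0 ≤ (re + rc)*(x - re)^2 := by
    apply mul_nonneg (by linarith) (sq_nonneg _)
  have hT3 : 0 ≤ ((t - re)*(t + re))*(re + rc + 2*x) := by
    apply mul_nonneg (mul_nonneg (by linarith) (by linarith)) (by linarith)
  nlinarith [hT1, hT2, hT3]

private lemma aux_P2nonpos (re rc x t : ℝ) (hre : 0 < re) (hrerc : re < rc)
    (hx1 : re ≤ x) (hx2 : x ≤ rc) (ht1 : re ≤ t) (ht2 : t ≤ rc) :
    (x - rc)*(t^2 - x*re) + (x - re)*(t^2 - x*rc) ≤ 0 := by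
  have hA : 0 ≤ ((rc - t)*(rc + t))*((re + rc)*(x - re)^2) := by
    apply mul_nonneg (mul_nonneg (by linarith) (by linarith))
    exact mul_nonneg (by linarith) (sq_nonneg _)
  have hB : 0 ≤ ((t - re)*(t + re))*((re + rc)*(x - rc)^2) := by
    apply mul_nonneg (mul_nonneg (by linarith) (by linarith))
    exact mul_nonneg (by linarith) (sq_nonneg _)
  have hfac : 0 < rc^2 - re^2 := by nlinarith
  nlinarith [hA, hB, hfac]

private lemma quartic_deriv (Λ m a : ℝ) (x : ℝ) :
    HasDerivAt (fun r : ℝ => -(Λ/3)*r^4 + (1 - Λ*a^2/3)*r^2 - 2*m*r + a^2)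
      (-(4*Λ/3)*x^3 + 2*(1-Λ*a^2/3)*x - 2*m) x := by
  have h := ((((hasDerivAt_pow 4 x).const_mul (-(Λ/3))).add
      ((hasDerivAt_pow 2 x).const_mul (1 - Λ*a^2/3))).sub
      ((hasDerivAt_id x).const_mul (2*m))).add_const (a^2)
  refine h.congr_deriv ?_
  push_cast
  ring

set_option maxHeartbeats 4000000 in
/-- **no trapping of T-orthogonal bicharacteristics.** Let
`r₀ ∈ [r_e, r_c]` and `ε > 0`. There is no global solution
`s ↦ (r(s), θ(s), ξ_t(s), ξ_r(s), ξ_φ(s), ξ_θ(s))` of Hamilton's equations for the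
rescaled dual metric Hamiltonian `q` (with `r' = ∂_{ξ_r}q`, `θ' = ∂_{ξ_θ}q`,
`ξ_t' = 0`, `ξ_φ' = 0`, `ξ_r' = −∂_r q`, `ξ_θ' = −∂_θ q`), staying in the region
`(r_e, r_c) × (0, π)`, which is null (`q = 0` at `s = 0`) with nonzero covector,
T-orthogonal (`ξ_t(0) + (a/(r₀²+a²))ξ_φ(0) = 0`), and with
`r(s) ∈ [r_e+ε, r_c−ε]` for all `s`: every lightlike bicharacteristic orthogonal to
`T = ∂_t + (a/(r₀²+a²))∂_φ` eventually leaves the region `r_e+ε ≤ r ≤ r_c−ε`. -/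
theorem no_trapping_T_orthogonal
    (Λ m a rm rC re rc : ℝ) (hΛ : 0 < Λ) (hm : 0 < m)
    (μ : ℝ → ℝ)
    (hμ : ∀ r, μ r = -(Λ/3)*r^4 + (1 - Λ*a^2/3)*r^2 - 2*m*r + a^2)
    (hord : rm < rC ∧ rC < re ∧ re < rc)
    (hroots : ∀ r, μ r = -(Λ/3)*(r - rm)*(r - rC)*(r - re)*(r - rc))
    (b : ℝ) (hb : b = 1 + Λ*a^2/3)
    (c : ℝ → ℝ) (hc : ∀ θ, c θ = 1 + Λ*a^2/3*(cos θ)^2)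
    (r₀ : ℝ) (hr₀ : re ≤ r₀ ∧ r₀ ≤ rc)
    (q : ℝ → ℝ → ℝ → ℝ → ℝ → ℝ → ℝ)
    (hq : ∀ r θ ξt ξr ξφ ξθ, q r θ ξt ξr ξφ ξθ
      = μ r*ξr^2 + (b^2/(c θ*(sin θ)^2))*(a*(sin θ)^2*ξt + ξφ)^2
        - (b^2/μ r)*((r^2 + a^2)*ξt + a*ξφ)^2 + c θ*ξθ^2)
    (ε : ℝ) (hε : 0 < ε) :
    ¬ ∃ rr θθ Ξt Ξr Ξφ Ξθ : ℝ → ℝ,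
      (∀ s, re < rr s ∧ rr s < rc) ∧
      (∀ s, 0 < θθ s ∧ θθ s < π) ∧
      (∀ s, HasDerivAt rr
        (deriv (fun x => q (rr s) (θθ s) (Ξt s) x (Ξφ s) (Ξθ s)) (Ξr s)) s) ∧
      (∀ s, HasDerivAt θθ
        (deriv (fun x => q (rr s) (θθ s) (Ξt s) (Ξr s) (Ξφ s) x) (Ξθ s)) s) ∧
      (∀ s, HasDerivAt Ξt 0 s) ∧
      (∀ s, HasDerivAt Ξφ 0 s) ∧
      (∀ s, HasDerivAt Ξr
        (-(deriv (fun x => q x (θθ s) (Ξt s) (Ξr s) (Ξφ s) (Ξθ s)) (rr s))) s) ∧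
      (∀ s, HasDerivAt Ξθ
        (-(deriv (fun x => q (rr s) x (Ξt s) (Ξr s) (Ξφ s) (Ξθ s)) (θθ s))) s) ∧
      q (rr 0) (θθ 0) (Ξt 0) (Ξr 0) (Ξφ 0) (Ξθ 0) = 0 ∧
      (Ξt 0, Ξr 0, Ξφ 0, Ξθ 0) ≠ ((0:ℝ), (0:ℝ), (0:ℝ), (0:ℝ)) ∧
      Ξt 0 + (a/(r₀^2 + a^2))*Ξφ 0 = 0 ∧
      (∀ s, re + ε ≤ rr s ∧ rr s ≤ rc - ε) := by
  rintro ⟨rr, θθ, Ξt, Ξr, Ξφ, Ξθ, hdom, hdomθ, hdr, hdθ, hdΞt, hdΞφ, hdΞr, hdΞθ,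
    hq00, hnz, horth, hband⟩
  obtain ⟨ho1, ho2, ho3⟩ := hord
  obtain ⟨hr01, hr02⟩ := hr₀
  have hK : (0:ℝ) < Λ/3 := by linarith
  -- coefficient identities
  have hco : ∀ r : ℝ, -(Λ/3)*r^4 + (1 - Λ*a^2/3)*r^2 - 2*m*r + a^2
      = -(Λ/3)*(r - rm)*(r - rC)*(r - re)*(r - rc) := fun r => (hμ r).symm.trans (hroots r)
  have h1 := hco 1
  have hm1 := hco (-1)
  have h2 := hco 2
  have hm2 := hco (-2)
  have h0 := hco 0
  have hKe1 : Λ/3*(rm + rC + re + rc) = 0 := by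
    linear_combination (1/6)*h1 - (1/6)*hm1 - (1/12)*h2 + (1/12)*hm2
  have hrm : rm = -(rC + re + rc) := by
    rcases mul_eq_zero.mp hKe1 with h | h
    · exact absurd h hK.ne'
    · linarith
  subst hrm
  have h2rC : 0 < 2*rC + re + rc := by linarith
  -- re is positive
  have hre0 : 0 < re := by
    by_contra hre
    push_neg at hre
    rcases lt_or_eq_of_le hre with hrel | hree
    · -- re < 0
      have hrC0 : rC < 0 := lt_trans ho2 hrel
      have hrc0 : 0 < rc + re := by linarith
      have hμre : μ re = 0 := by rw [hroots]; ring
      have hodd : μ (-re) = μ re + 4*m*re := by rw [hμ, hμ]; ring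
      have hneg : μ (-re) < 0 := by rw [hodd, hμre]; nlinarith
      have hpos : 0 < μ (-re) := by
        have key : μ (-re) = Λ/3*((-re - (-(rC+re+rc)))*((-re - rC)*((-re - re)*(rc - (-re))))) := by
          rw [hroots]; ring
        rw [key]
        have f1 : 0 < -re - (-(rC+re+rc)) := by linarith
        have f2 : 0 < -re - rC := by linarith
        have f3 : 0 < -re - re := by linarith
        have f4 : 0 < rc - (-re) := by linarith
        exact mul_pos hK (mul_pos f1 (mul_pos f2 (mul_pos f3 f4)))
      linarith
    · -- re = 0
      have hrC0 : rC < 0 := by rw [hree] at ho2; exact ho2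
      have hμrC : μ rC = 0 := by rw [hroots]; ring
      have hodd : μ (-rC) = μ rC + 4*m*rC := by rw [hμ, hμ]; ring
      have hneg : μ (-rC) < 0 := by rw [hodd, hμrC]; nlinarith
      have hpos : 0 < μ (-rC) := by
        have key : μ (-rC) = Λ/3*((-rC - (-(rC+re+rc)))*((-rC - rC)*((-rC - re)*(rc - (-rC))))) := by
          rw [hroots]; ring
        rw [key]
        have f1 : 0 < -rC - (-(rC+re+rc)) := by rw [hree]; linarith
        have f2 : 0 < -rC - rC := by linarith
        have f3 : 0 < -rC - re := by rw [hree]; linarith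
        have f4 : 0 < rc - (-rC) := by linarith
        exact mul_pos hK (mul_pos f1 (mul_pos f2 (mul_pos f3 f4)))
      linarith
  have hrc0 : 0 < rc := by linarith
  have hr₀0 : 0 < r₀ := lt_of_lt_of_le hre0 hr01
  -- μ is positive on the open interval
  have hμpos : ∀ s : ℝ, 0 < μ (rr s) := by
    intro s
    obtain ⟨hx1, hx2⟩ := hdom s
    have key : μ (rr s) = Λ/3*((rr s - (-(rC+re+rc)))*((rr s - rC)*((rr s - re)*(rc - rr s)))) := by
      rw [hroots]; ring
    rw [key]
    have f1 : 0 < rr s - (-(rC+re+rc)) := by linarith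
    have f2 : 0 < rr s - rC := by linarith
    have f3 : 0 < rr s - re := by linarith
    have f4 : 0 < rc - rr s := by linarith
    exact mul_pos hK (mul_pos f1 (mul_pos f2 (mul_pos f3 f4)))
  have hμne : ∀ s : ℝ, μ (rr s) ≠ 0 := fun s => (hμpos s).ne'
  -- uniform lower bound for μ on the band
  have hμlow : ∀ s : ℝ, Λ/3*((re + ε - (-(rC+re+rc)))*((re + ε - rC)*(ε*ε))) ≤ μ (rr s) := by
    intro s
    obtain ⟨hx1, hx2⟩ := hband s
    obtain ⟨hd1, hd2⟩ := hdom s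
    have key : μ (rr s) = Λ/3*((rr s - (-(rC+re+rc)))*((rr s - rC)*((rr s - re)*(rc - rr s)))) := by
      rw [hroots]; ring
    rw [key]
    have g1 : re + ε - (-(rC+re+rc)) ≤ rr s - (-(rC+re+rc)) := by linarith
    have g2 : re + ε - rC ≤ rr s - rC := by linarith
    have g3 : ε ≤ rr s - re := by linarith
    have g4 : ε ≤ rc - rr s := by linarith
    have p1 : (0:ℝ) < re + ε - (-(rC+re+rc)) := by linarith
    have p2 : (0:ℝ) < re + ε - rC := by linarith
    gcongr <;> linarith
  have hm0pos : 0 < Λ/3*((re + ε - (-(rC+re+rc)))*((re + ε - rC)*(ε*ε))) := by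
    have p1 : (0:ℝ) < re + ε - (-(rC+re+rc)) := by linarith
    have p2 : (0:ℝ) < re + ε - rC := by linarith
    positivity
  -- derivative of μ in root form
  have hdmu : ∀ x : ℝ, -(4*Λ/3)*x^3 + 2*(1-Λ*a^2/3)*x - 2*m
      = -(Λ/3)*((x-rC)*(x-re)*(x-rc) + (x-(-(rC+re+rc)))*(x-re)*(x-rc)
        + (x-(-(rC+re+rc)))*(x-rC)*(x-rc) + (x-(-(rC+re+rc)))*(x-rC)*(x-re)) := by
    intro x
    linear_combination ((2*x+1)/2)*h1 + ((2*x-1)/2)*hm1 - (2*x)*h0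
  -- positivity of ψ on the band
  have hψpos : ∀ s : ℝ,
      0 < 4*rr s*μ (rr s) - ((rr s)^2 - r₀^2)*(-(4*Λ/3)*(rr s)^3 + 2*(1-Λ*a^2/3)*(rr s) - 2*m) := by
    intro s
    obtain ⟨hx1, hx2⟩ := hband s
    have hx1' : re ≤ rr s := by linarith
    have hx2' : rr s ≤ rc := by linarith
    have hP1 := aux_P1pos rC re rc (rr s) r₀ h2rC ho2 hre0 ho3 hx1' hx2' hr01 hr02
    have hP2 := aux_P2nonpos re rc (rr s) r₀ hre0 ho3 hx1' hx2' hr01 hr02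
    have hval : 4*rr s*μ (rr s) - ((rr s)^2 - r₀^2)*(-(4*Λ/3)*(rr s)^3 + 2*(1-Λ*a^2/3)*(rr s) - 2*m)
        = Λ/3*(((rr s - re)*(rc - rr s))*((rr s - rC)*(r₀^2 - rr s*(-(rC+re+rc)))
            + (rr s - (-(rC+re+rc)))*(r₀^2 - rr s*rC)))
          + Λ/3*(((rr s - (-(rC+re+rc)))*(rr s - rC))*(-((rr s - rc)*(r₀^2 - rr s*re)
            + (rr s - re)*(r₀^2 - rr s*rc)))) := by
      rw [hroots, hdmu]
      ring
    rw [hval]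
    obtain ⟨hd1, hd2⟩ := hdom s
    have hA : 0 < ((rr s - re)*(rc - rr s))*((rr s - rC)*(r₀^2 - rr s*(-(rC+re+rc)))
        + (rr s - (-(rC+re+rc)))*(r₀^2 - rr s*rC)) := by
      apply mul_pos (mul_pos (by linarith) (by linarith)) hP1
    have hB : 0 ≤ ((rr s - (-(rC+re+rc)))*(rr s - rC))*(-((rr s - rc)*(r₀^2 - rr s*re)
        + (rr s - re)*(r₀^2 - rr s*rc))) := by
      apply mul_nonneg (le_of_lt (mul_pos (by linarith) (by linarith))) (by linarith)
    exact add_pos_of_pos_of_nonneg (mul_pos hK hA) (mul_nonneg hK.le hB)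
  clear hco h1 hm1 h2 hm2 h0 hKe1
  -- basic positivity facts
  have hb0 : 0 < b := by rw [hb]; positivity
  have hcpos : ∀ s : ℝ, 0 < c (θθ s) := by intro s; rw [hc]; positivity
  have hsinpos : ∀ s : ℝ, 0 < sin (θθ s) :=
    fun s => sin_pos_of_pos_of_lt_pi (hdomθ s).1 (hdomθ s).2
  have hdenne : ∀ s : ℝ, c (θθ s)*sin (θθ s)^2 ≠ 0 :=
    fun s => ne_of_gt (mul_pos (hcpos s) (pow_pos (hsinpos s) 2))
  -- Hamilton's equations in explicit form
  have hvr : ∀ s : ℝ, HasDerivAt rr (2*μ (rr s)*Ξr s) s := by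
    intro s
    have hf : HasDerivAt (fun x : ℝ => μ (rr s)*x^2
        + b^2/(c (θθ s)*sin (θθ s)^2)*(a*sin (θθ s)^2*Ξt s + Ξφ s)^2
        - b^2/μ (rr s)*((rr s^2 + a^2)*Ξt s + a*Ξφ s)^2 + c (θθ s)*Ξθ s^2)
        (2*μ (rr s)*Ξr s) (Ξr s) := by
      have h := ((((hasDerivAt_pow 2 (Ξr s)).const_mul (μ (rr s))).add_const
        (b^2/(c (θθ s)*sin (θθ s)^2)*(a*sin (θθ s)^2*Ξt s + Ξφ s)^2)).sub_const
        (b^2/μ (rr s)*((rr s^2 + a^2)*Ξt s + a*Ξφ s)^2)).add_const (c (θθ s)*Ξθ s^2)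
      refine h.congr_deriv ?_
      push_cast; ring
    have hf2 := hf.congr_of_eventuallyEq
      (Filter.Eventually.of_forall (fun x => hq (rr s) (θθ s) (Ξt s) x (Ξφ s) (Ξθ s)))
    have h := hdr s
    rwa [hf2.deriv] at h
  have hvθ : ∀ s : ℝ, HasDerivAt θθ (2*c (θθ s)*Ξθ s) s := by
    intro s
    have hf : HasDerivAt (fun x : ℝ => μ (rr s)*Ξr s^2
        + b^2/(c (θθ s)*sin (θθ s)^2)*(a*sin (θθ s)^2*Ξt s + Ξφ s)^2
        - b^2/μ (rr s)*((rr s^2 + a^2)*Ξt s + a*Ξφ s)^2 + c (θθ s)*x^2)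
        (2*c (θθ s)*Ξθ s) (Ξθ s) := by
      have h := ((hasDerivAt_pow 2 (Ξθ s)).const_mul (c (θθ s))).const_add
        (μ (rr s)*Ξr s^2
          + b^2/(c (θθ s)*sin (θθ s)^2)*(a*sin (θθ s)^2*Ξt s + Ξφ s)^2
          - b^2/μ (rr s)*((rr s^2 + a^2)*Ξt s + a*Ξφ s)^2)
      refine h.congr_deriv ?_
      push_cast; ring
    have hf2 := hf.congr_of_eventuallyEq
      (Filter.Eventually.of_forall (fun x => hq (rr s) (θθ s) (Ξt s) (Ξr s) (Ξφ s) x))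
    have h := hdθ s
    rwa [hf2.deriv] at h
  -- derivative of μ at a point of the curve
  have hμx : ∀ s : ℝ, HasDerivAt μ (-(4*Λ/3)*rr s^3 + 2*(1-Λ*a^2/3)*rr s - 2*m) (rr s) :=
    fun s => (quartic_deriv Λ m a (rr s)).congr_of_eventuallyEq (Filter.Eventually.of_forall hμ)
  have hvξr : ∀ s : ℝ, HasDerivAt Ξr (-(
      (-(4*Λ/3)*rr s^3 + 2*(1-Λ*a^2/3)*rr s - 2*m)*Ξr s^2
      - b^2*(4*rr s*Ξt s*((rr s^2 + a^2)*Ξt s + a*Ξφ s)*μ (rr s)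
          - ((rr s^2 + a^2)*Ξt s + a*Ξφ s)^2*(-(4*Λ/3)*rr s^3 + 2*(1-Λ*a^2/3)*rr s - 2*m))
        /μ (rr s)^2)) s := by
    intro s
    have hΦ : HasDerivAt (fun x : ℝ => (x^2 + a^2)*Ξt s + a*Ξφ s) (2*rr s*Ξt s) (rr s) := by
      have h := (((hasDerivAt_pow 2 (rr s)).add_const (a^2)).mul_const (Ξt s)).add_const (a*Ξφ s)
      refine h.congr_deriv ?_
      push_cast; ring
    have hquot := (hasDerivAt_const (rr s) (b^2)).div (hμx s) (hμne s)
    have hbuilt := ((((hμx s).mul_const (Ξr s^2)).add_const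
        (b^2/(c (θθ s)*sin (θθ s)^2)*(a*sin (θθ s)^2*Ξt s + Ξφ s)^2)).sub
        (hquot.mul (hΦ.pow 2))).add_const (c (θθ s)*Ξθ s^2)
    have hfq : HasDerivAt (fun x : ℝ => μ x*Ξr s^2
        + b^2/(c (θθ s)*sin (θθ s)^2)*(a*sin (θθ s)^2*Ξt s + Ξφ s)^2
        - b^2/μ x*((x^2 + a^2)*Ξt s + a*Ξφ s)^2 + c (θθ s)*Ξθ s^2)
        ((-(4*Λ/3)*rr s^3 + 2*(1-Λ*a^2/3)*rr s - 2*m)*Ξr s^2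
          - b^2*(4*rr s*Ξt s*((rr s^2 + a^2)*Ξt s + a*Ξφ s)*μ (rr s)
              - ((rr s^2 + a^2)*Ξt s + a*Ξφ s)^2*(-(4*Λ/3)*rr s^3 + 2*(1-Λ*a^2/3)*rr s - 2*m))
            /μ (rr s)^2) (rr s) := by
      refine hbuilt.congr_deriv ?_
      have := hμne s
      simp only [Pi.mul_apply, Pi.pow_apply, Pi.div_apply, Pi.add_apply, Pi.sub_apply]
      field_simp
      ring
    have hf2 := hfq.congr_of_eventuallyEq
      (Filter.Eventually.of_forall (fun x => hq x (θθ s) (Ξt s) (Ξr s) (Ξφ s) (Ξθ s)))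
    have h := hdΞr s
    rwa [hf2.deriv] at h
  have hcx : ∀ s : ℝ, HasDerivAt c (-(2*(Λ*a^2/3)*sin (θθ s)*cos (θθ s))) (θθ s) := by
    intro s
    have h := (((hasDerivAt_cos (θθ s)).pow 2).const_mul (Λ*a^2/3)).const_add 1
    have h2 : HasDerivAt (fun θ : ℝ => 1 + Λ*a^2/3*cos θ^2)
        (-(2*(Λ*a^2/3)*sin (θθ s)*cos (θθ s))) (θθ s) := by
      refine h.congr_deriv ?_
      push_cast; ring
    exact h2.congr_of_eventuallyEq (Filter.Eventually.of_forall hc)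
  have hsin2 : ∀ s : ℝ, HasDerivAt (fun x : ℝ => sin x^2) (2*sin (θθ s)*cos (θθ s)) (θθ s) := by
    intro s
    have h := (hasDerivAt_sin (θθ s)).pow 2
    refine h.congr_deriv ?_
    push_cast; ring
  have hvξθ : ∀ s : ℝ, HasDerivAt Ξθ (-(
      b^2*(2*(a*sin (θθ s)^2*Ξt s + Ξφ s)*(2*a*sin (θθ s)*cos (θθ s)*Ξt s)*(c (θθ s)*sin (θθ s)^2)
        - (a*sin (θθ s)^2*Ξt s + Ξφ s)^2*(-(2*(Λ*a^2/3)*sin (θθ s)*cos (θθ s))*sin (θθ s)^2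
            + c (θθ s)*(2*sin (θθ s)*cos (θθ s))))/(c (θθ s)*sin (θθ s)^2)^2
      + (-(2*(Λ*a^2/3)*sin (θθ s)*cos (θθ s)))*Ξθ s^2)) s := by
    intro s
    have hden := (hcx s).mul (hsin2 s)
    have hquot2 := (hasDerivAt_const (θθ s) (b^2)).div hden (hdenne s)
    have hnum : HasDerivAt (fun x : ℝ => a*sin x^2*Ξt s + Ξφ s)
        (2*a*sin (θθ s)*cos (θθ s)*Ξt s) (θθ s) := by
      have h := (((hsin2 s).const_mul a).mul_const (Ξt s)).add_const (Ξφ s)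
      refine h.congr_deriv ?_
      ring
    have hbuilt := (((hquot2.mul (hnum.pow 2)).const_add (μ (rr s)*Ξr s^2)).sub_const
        (b^2/μ (rr s)*((rr s^2 + a^2)*Ξt s + a*Ξφ s)^2)).add ((hcx s).mul_const (Ξθ s^2))
    have hfq : HasDerivAt (fun x : ℝ => μ (rr s)*Ξr s^2
        + b^2/(c x*sin x^2)*(a*sin x^2*Ξt s + Ξφ s)^2
        - b^2/μ (rr s)*((rr s^2 + a^2)*Ξt s + a*Ξφ s)^2 + c x*Ξθ s^2)
        (b^2*(2*(a*sin (θθ s)^2*Ξt s + Ξφ s)*(2*a*sin (θθ s)*cos (θθ s)*Ξt s)*(c (θθ s)*sin (θθ s)^2)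
          - (a*sin (θθ s)^2*Ξt s + Ξφ s)^2*(-(2*(Λ*a^2/3)*sin (θθ s)*cos (θθ s))*sin (θθ s)^2
              + c (θθ s)*(2*sin (θθ s)*cos (θθ s))))/(c (θθ s)*sin (θθ s)^2)^2
        + (-(2*(Λ*a^2/3)*sin (θθ s)*cos (θθ s)))*Ξθ s^2) (θθ s) := by
      refine hbuilt.congr_deriv ?_
      have h1 := hdenne s
      have h2 := (hcpos s).ne'
      have h3 := (hsinpos s).ne'
      simp only [Pi.mul_apply, Pi.pow_apply, Pi.div_apply, Pi.add_apply, Pi.sub_apply]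
      field_simp
      ring
    have hf2 := hfq.congr_of_eventuallyEq
      (Filter.Eventually.of_forall (fun x => hq (rr s) x (Ξt s) (Ξr s) (Ξφ s) (Ξθ s)))
    have h := hdΞθ s
    rwa [hf2.deriv] at h
  -- Ξt and Ξφ are constant
  have hΞtc : ∀ s : ℝ, Ξt s = Ξt 0 :=
    fun s => is_const_of_deriv_eq_zero (fun x => (hdΞt x).differentiableAt)
      (fun x => (hdΞt x).deriv) s 0
  have hΞφc : ∀ s : ℝ, Ξφ s = Ξφ 0 :=
    fun s => is_const_of_deriv_eq_zero (fun x => (hdΞφ x).differentiableAt)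
      (fun x => (hdΞφ x).deriv) s 0
  -- conservation of q along the flow
  have hcons : ∀ s : ℝ, HasDerivAt
      (fun σ => q (rr σ) (θθ σ) (Ξt σ) (Ξr σ) (Ξφ σ) (Ξθ σ)) 0 s := by
    intro s
    have hμc : HasDerivAt (fun σ => μ (rr σ))
        ((-(4*Λ/3)*rr s^3 + 2*(1-Λ*a^2/3)*rr s - 2*m)*(2*μ (rr s)*Ξr s)) s := by
      have := (hμx s).comp s (hvr s)
      exact this
    have hsc : HasDerivAt (fun σ => sin (θθ σ)) (cos (θθ s)*(2*c (θθ s)*Ξθ s)) s := by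
      have := (hasDerivAt_sin (θθ s)).comp s (hvθ s)
      exact this
    have hcc : HasDerivAt (fun σ => c (θθ σ))
        (-(2*(Λ*a^2/3)*sin (θθ s)*cos (θθ s))*(2*c (θθ s)*Ξθ s)) s := by
      have := (hcx s).comp s (hvθ s)
      exact this
    have hA1 := hμc.mul ((hvξr s).pow 2)
    have hDc := hcc.mul (hsc.pow 2)
    have hNc := (((hsc.pow 2).const_mul a).mul (hdΞt s)).add (hdΞφ s)
    have hA2 := ((hasDerivAt_const s (b^2)).div hDc (hdenne s)).mul (hNc.pow 2)
    have hΦc := ((((hvr s).pow 2).add_const (a^2)).mul (hdΞt s)).add ((hdΞφ s).const_mul a)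
    have hA3 := ((hasDerivAt_const s (b^2)).div hμc (hμne s)).mul (hΦc.pow 2)
    have hA4 := hcc.mul ((hvξθ s).pow 2)
    have htot := ((hA1.add hA2).sub hA3).add hA4
    refine HasDerivAt.congr_of_eventuallyEq ?_
      (Filter.Eventually.of_forall (fun σ => hq (rr σ) (θθ σ) (Ξt σ) (Ξr σ) (Ξφ σ) (Ξθ σ)))
    refine htot.congr_deriv ?_
    have h1 := hμne s
    have h2 := hdenne s
    have h3 := (hcpos s).ne'
    have h4 := (hsinpos s).ne'
    simp only [Pi.mul_apply, Pi.pow_apply, Pi.div_apply, Pi.add_apply, Pi.sub_apply]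
    field_simp
    ring
  have hqall : ∀ s : ℝ, q (rr s) (θθ s) (Ξt s) (Ξr s) (Ξφ s) (Ξθ s) = 0 := by
    intro s
    have := is_const_of_deriv_eq_zero (fun x => (hcons x).differentiableAt)
      (fun x => (hcons x).deriv) s 0
    rw [this]
    exact hq00
  have hμcomp : ∀ s : ℝ, HasDerivAt (fun σ => μ (rr σ))
      ((-(4*Λ/3)*rr s^3 + 2*(1-Λ*a^2/3)*rr s - 2*m)*(2*μ (rr s)*Ξr s)) s := by
    intro s
    have := (hμx s).comp s (hvr s)
    exact this
  have ha2 : (0:ℝ) < r₀^2 + a^2 := by positivity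
  have haF : a*Ξφ 0 = -((r₀^2 + a^2)*Ξt 0) := by
    have h := horth
    field_simp at h
    linarith
  -- pointwise vanishing lemma
  have hzero : ∀ s : ℝ, ((rr s^2 + a^2)*Ξt s + a*Ξφ s) = 0 →
      Ξr s = 0 ∧ Ξθ s = 0 ∧ a*sin (θθ s)^2*Ξt s + Ξφ s = 0 := by
    intro s hΦ0
    have h := hqall s
    rw [hq] at h
    rw [hΦ0] at h
    have hc2 : 0 < b^2/(c (θθ s)*sin (θθ s)^2) :=
      div_pos (by positivity) (mul_pos (hcpos s) (pow_pos (hsinpos s) 2))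
    have t1 : 0 ≤ μ (rr s)*Ξr s^2 := mul_nonneg (hμpos s).le (sq_nonneg _)
    have t2 : 0 ≤ b^2/(c (θθ s)*sin (θθ s)^2)*(a*sin (θθ s)^2*Ξt s + Ξφ s)^2 :=
      mul_nonneg hc2.le (sq_nonneg _)
    have t3 : 0 ≤ c (θθ s)*Ξθ s^2 := mul_nonneg (hcpos s).le (sq_nonneg _)
    have hz : μ (rr s)*Ξr s^2 + b^2/(c (θθ s)*sin (θθ s)^2)*(a*sin (θθ s)^2*Ξt s + Ξφ s)^2
        + c (θθ s)*Ξθ s^2 = 0 := by linear_combination h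
    refine ⟨?_, ?_, ?_⟩
    · have hzz : μ (rr s)*Ξr s^2 = 0 := le_antisymm (by linarith) t1
      rcases mul_eq_zero.mp hzz with h' | h'
      · exact absurd h' (hμne s)
      · exact (pow_eq_zero_iff two_ne_zero).mp h'
    · have hzz : c (θθ s)*Ξθ s^2 = 0 := le_antisymm (by linarith) t3
      rcases mul_eq_zero.mp hzz with h' | h'
      · exact absurd h' (hcpos s).ne'
      · exact (pow_eq_zero_iff two_ne_zero).mp h'
    · have hzz : b^2/(c (θθ s)*sin (θθ s)^2)*(a*sin (θθ s)^2*Ξt s + Ξφ s)^2 = 0 :=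
        le_antisymm (by linarith) t2
      rcases mul_eq_zero.mp hzz with h' | h'
      · exact absurd h' hc2.ne'
      · exact (pow_eq_zero_iff two_ne_zero).mp h'
  rcases eq_or_ne (Ξt 0) 0 with hT0 | hT
  · -- Ξt 0 = 0 : contradiction with nonzero covector at s = 0
    have haF0 : a*Ξφ 0 = 0 := by rw [hT0] at haF; simpa using haF
    have hΦ0 : (rr 0^2 + a^2)*Ξt 0 + a*Ξφ 0 = 0 := by rw [hT0, haF0]; ring
    obtain ⟨hr0, hθ0, hN0⟩ := hzero 0 hΦ0
    have hφ0 : Ξφ 0 = 0 := by rw [hT0] at hN0; simpa using hN0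
    exact hnz (by rw [hT0, hr0, hφ0, hθ0])
  -- main case : Ξt 0 ≠ 0
  have hΦu0 : ∀ s : ℝ, (rr s^2 + a^2)*Ξt 0 + a*Ξφ 0 = Ξt 0*(rr s^2 - r₀^2) := by
    intro s
    linear_combination haF
  have hΦu : ∀ s : ℝ, (rr s^2 + a^2)*Ξt s + a*Ξφ s = Ξt 0*(rr s^2 - r₀^2) := by
    intro s
    rw [hΞtc s, hΞφc s]
    exact hΦu0 s
  have hu : ∀ s : ℝ, rr s^2 - r₀^2 ≠ 0 := by
    intro s h0
    have hΦ0 : (rr s^2 + a^2)*Ξt s + a*Ξφ s = 0 := by rw [hΦu s, h0, mul_zero]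
    obtain ⟨-, -, hN0⟩ := hzero s hΦ0
    have hsc2 := sin_sq_add_cos_sq (θθ s)
    have hN0' : a*sin (θθ s)^2*Ξt 0 + Ξφ 0 = 0 := by rw [← hΞtc s, ← hΞφc s]; exact hN0
    have hkey : Ξt 0*(r₀^2 + a^2*cos (θθ s)^2) = 0 := by
      linear_combination (-a)*hN0' + haF + a^2*Ξt 0*hsc2
    rcases mul_eq_zero.mp hkey with h' | h'
    · exact hT h'
    · nlinarith [sq_nonneg (a*cos (θθ s)), hr₀0]
  -- the sign of u is constant
  have hrrd : Differentiable ℝ rr := fun t => (hvr t).differentiableAt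
  set sg : ℝ := if 0 < rr 0^2 - r₀^2 then 1 else -1 with hsgdef
  have hsg1 : sg = 1 ∨ sg = -1 := by rw [hsgdef]; split_ifs <;> simp
  have hsgne : sg ≠ 0 := by rcases hsg1 with h | h <;> rw [h] <;> norm_num
  have hsg0 : 0 < sg*(rr 0^2 - r₀^2) := by
    rw [hsgdef]
    split_ifs with h
    · simpa using h
    · have h2 : rr 0^2 - r₀^2 < 0 := lt_of_le_of_ne (not_lt.mp h) (hu 0)
      nlinarith
  have hsgall : ∀ s : ℝ, 0 < sg*(rr s^2 - r₀^2) := by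
    intro s
    by_contra hneg
    push_neg at hneg
    have hne0 : sg*(rr s^2 - r₀^2) ≠ 0 := fun h0 => by
      rcases mul_eq_zero.mp h0 with h' | h'
      · exact hsgne h'
      · exact hu s h'
    have hlt : sg*(rr s^2 - r₀^2) < 0 := lt_of_le_of_ne hneg hne0
    have hcont : Continuous (fun t => sg*(rr t^2 - r₀^2)) :=
      continuous_const.mul (((hrrd.continuous).pow 2).sub continuous_const)
    rcases lt_trichotomy s 0 with hs | hs | hs
    · obtain ⟨t, -, ht⟩ := intermediate_value_Icc hs.le hcont.continuousOn
        (Set.mem_Icc.mpr ⟨hlt.le, hsg0.le⟩)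
      rcases mul_eq_zero.mp ht with h' | h'
      · exact hsgne h'
      · exact hu t h'
    · rw [hs] at hlt; linarith
    · obtain ⟨t, -, ht⟩ := intermediate_value_Icc' hs.le hcont.continuousOn
        (Set.mem_Icc.mpr ⟨hlt.le, hsg0.le⟩)
      rcases mul_eq_zero.mp ht with h' | h'
      · exact hsgne h'
      · exact hu t h'
  -- escape function G = sg * 2 sqrt(mu) * xi_r
  set m0 : ℝ := Λ/3*((re + ε - (-(rC+re+rc)))*((re + ε - rC)*(ε*ε))) with hm0def
  have hS2 : ∀ t : ℝ, Real.sqrt (μ (rr t))^2 = μ (rr t) := fun t => Real.sq_sqrt (hμpos t).le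
  have hSpos : ∀ t : ℝ, 0 < Real.sqrt (μ (rr t)) := fun t => Real.sqrt_pos.mpr (hμpos t)
  set G : ℝ → ℝ := fun σ => sg*(2*Real.sqrt (μ (rr σ))*Ξr σ) with hGdef
  have hG : ∀ s : ℝ, HasDerivAt G
      (sg*(2*b^2*Ξt 0^2*((rr s^2 - r₀^2)*((4*rr s*μ (rr s)
        - (rr s^2 - r₀^2)*(-(4*Λ/3)*rr s^3 + 2*(1-Λ*a^2/3)*rr s - 2*m))
        *(Real.sqrt (μ (rr s))/μ (rr s)^2))))) s := by
    intro s
    have hx := hvξr s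
    rw [hΞtc s, hΞφc s, hΦu0 s] at hx
    have hsq := (hμcomp s).sqrt (hμne s)
    have hbuilt := ((hsq.const_mul 2).mul hx).const_mul sg
    rw [hGdef]
    refine hbuilt.congr_deriv ?_
    set S := Real.sqrt (μ (rr s)) with hSdef
    have hS2' : S^2 = μ (rr s) := hS2 s
    have hSne : S ≠ 0 := (hSpos s).ne'
    rw [← hS2']
    field_simp
    ring
  have hγpos : ∀ s : ℝ, 0 < sg*(2*b^2*Ξt 0^2*((rr s^2 - r₀^2)*((4*rr s*μ (rr s)
      - (rr s^2 - r₀^2)*(-(4*Λ/3)*rr s^3 + 2*(1-Λ*a^2/3)*rr s - 2*m))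
      *(Real.sqrt (μ (rr s))/μ (rr s)^2)))) := by
    intro s
    have hT2 : 0 < Ξt 0^2 := lt_of_le_of_ne (sq_nonneg _) (Ne.symm (pow_ne_zero 2 hT))
    have h1 := hsgall s
    have h2 := hψpos s
    have h3 := hSpos s
    have h4 := hμpos s
    have heq : sg*(2*b^2*Ξt 0^2*((rr s^2 - r₀^2)*((4*rr s*μ (rr s)
        - (rr s^2 - r₀^2)*(-(4*Λ/3)*rr s^3 + 2*(1-Λ*a^2/3)*rr s - 2*m))
        *(Real.sqrt (μ (rr s))/μ (rr s)^2))))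
        = ((2*(b^2*Ξt 0^2))*(Real.sqrt (μ (rr s))/μ (rr s)^2))
          *((sg*(rr s^2 - r₀^2))*(4*rr s*μ (rr s)
            - (rr s^2 - r₀^2)*(-(4*Λ/3)*rr s^3 + 2*(1-Λ*a^2/3)*rr s - 2*m))) := by ring
    rw [heq]
    exact mul_pos (mul_pos (mul_pos two_pos (mul_pos (pow_pos hb0 2) hT2))
      (div_pos h3 (pow_pos h4 2))) (mul_pos h1 h2)
  have hGmono : StrictMono G :=
    strictMono_of_deriv_pos (fun x => by rw [(hG x).deriv]; exact hγpos x)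
  have hSG : ∀ t : ℝ, Real.sqrt (μ (rr t))*G t = sg*(2*μ (rr t)*Ξr t) := by
    intro t
    rw [hGdef]
    linear_combination (sg*2*Ξr t)*(hS2 t)
  have hSlow : ∀ t : ℝ, Real.sqrt m0 ≤ Real.sqrt (μ (rr t)) := fun t => Real.sqrt_le_sqrt (hμlow t)
  have hs0 : 0 < Real.sqrt m0 := Real.sqrt_pos.mpr hm0pos
  have hbound : ∀ t : ℝ, -rc ≤ sg*rr t ∧ sg*rr t ≤ rc := by
    intro t
    obtain ⟨h1, h2⟩ := hdom t
    rcases hsg1 with h | h <;> rw [h] <;> constructor <;> nlinarith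
  have hrc1 : (0:ℝ) < 2*rc + 1 := by linarith
  by_cases hcase : ∃ s₁, 0 < G s₁
  · obtain ⟨s₁, hs₁⟩ := hcase
    have hη : 0 < Real.sqrt m0*G s₁ := mul_pos hs0 hs₁
    have hmono : MonotoneOn (fun t => sg*rr t - (Real.sqrt m0*G s₁)*t) (Set.Ici s₁) := by
      apply monotoneOn_of_deriv_nonneg (convex_Ici s₁)
      · exact ((continuous_const.mul hrrd.continuous).sub
          (continuous_const.mul continuous_id)).continuousOn
      · intro x hx
        exact (((hvr x).const_mul sg).sub
          ((hasDerivAt_id' x).const_mul (Real.sqrt m0*G s₁))).differentiableAt.differentiableWithinAt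
      · intro x hx
        rw [interior_Ici] at hx
        have hd := ((hvr x).const_mul sg).sub ((hasDerivAt_id' x).const_mul (Real.sqrt m0*G s₁))
        rw [show deriv (fun t => sg*rr t - (Real.sqrt m0*G s₁)*t) x = _ from hd.deriv]
        have hGx : G s₁ ≤ G x := (hGmono hx).le
        have k0 : 0 < G x := lt_of_lt_of_le hs₁ hGx
        have k1 : Real.sqrt m0*G s₁ ≤ Real.sqrt m0*G x := mul_le_mul_of_nonneg_left hGx hs0.le
        have k2 : Real.sqrt m0*G x ≤ Real.sqrt (μ (rr x))*G x :=
          mul_le_mul_of_nonneg_right (hSlow x) k0.le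
        have k3 := hSG x
        linarith
    have hδpos : 0 < (2*rc + 1)/(Real.sqrt m0*G s₁) := div_pos hrc1 hη
    have hmem : s₁ + (2*rc + 1)/(Real.sqrt m0*G s₁) ∈ Set.Ici s₁ := Set.mem_Ici.mpr (by linarith)
    have hfar := hmono Set.self_mem_Ici hmem (by linarith)
    have hδeq : (Real.sqrt m0*G s₁)*((2*rc + 1)/(Real.sqrt m0*G s₁)) = 2*rc + 1 := by
      field_simp
    have hb1 := hbound s₁
    have hb2 := hbound (s₁ + (2*rc + 1)/(Real.sqrt m0*G s₁))
    simp only at hfar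
    linarith [hfar, hδeq, hb1.1, hb2.2]
  · push_neg at hcase
    have hG10 : G (-1) < G 0 := hGmono (by norm_num)
    have hGneg : G (-1) < 0 := lt_of_lt_of_le hG10 (hcase 0)
    have hη : 0 < -(Real.sqrt m0*G (-1)) := by nlinarith [mul_pos hs0 (neg_pos.mpr hGneg)]
    have hanti : AntitoneOn (fun t => sg*rr t + (-(Real.sqrt m0*G (-1)))*t) (Set.Iic (-1)) := by
      apply antitoneOn_of_deriv_nonpos (convex_Iic _)
      · exact ((continuous_const.mul hrrd.continuous).add
          (continuous_const.mul continuous_id)).continuousOn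
      · intro x hx
        exact (((hvr x).const_mul sg).add
          ((hasDerivAt_id' x).const_mul (-(Real.sqrt m0*G (-1))))).differentiableAt.differentiableWithinAt
      · intro x hx
        rw [interior_Iic] at hx
        have hd := ((hvr x).const_mul sg).add
          ((hasDerivAt_id' x).const_mul (-(Real.sqrt m0*G (-1))))
        rw [show deriv (fun t => sg*rr t + (-(Real.sqrt m0*G (-1)))*t) x = _ from hd.deriv]
        have hGx : G x ≤ G (-1) := (hGmono hx).le
        have k1 : Real.sqrt m0*G x ≤ Real.sqrt m0*G (-1) := mul_le_mul_of_nonneg_left hGx hs0.le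
        have k2 : Real.sqrt (μ (rr x))*G x ≤ Real.sqrt m0*G x :=
          mul_le_mul_of_nonpos_right (hSlow x) (hcase x)
        have k3 := hSG x
        linarith
    have hδpos : 0 < (2*rc + 1)/(-(Real.sqrt m0*G (-1))) := div_pos hrc1 hη
    have hmem : -1 - (2*rc + 1)/(-(Real.sqrt m0*G (-1))) ∈ Set.Iic (-1:ℝ) :=
      Set.mem_Iic.mpr (by linarith)
    have hfar := hanti hmem Set.self_mem_Iic (by linarith)
    have hδeq : (-(Real.sqrt m0*G (-1)))*((2*rc + 1)/(-(Real.sqrt m0*G (-1)))) = 2*rc + 1 :=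
      mul_div_cancel₀ _ hη.ne'
    have hb1 := hbound (-1)
    have hb2 := hbound (-1 - (2*rc + 1)/(-(Real.sqrt m0*G (-1))))
    simp only at hfar
    linarith [hfar, hδeq, hb1.1, hb2.2]
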